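/- (Necessity direction of the Cut rule.) Let P be a probability measure, and let A, B, C be measurable events with P(A ∩ B) > 0. Set x = P(C | A ∩ B) and y = P(B|A). Then x·y ≤ P(C|A) ≤ x·y + 1 - y. -/

import Mathlib

open MeasureTheory

/-- Conditional probability `P(E|H) = P(E ∩ H) / P(H)` as a real number. -/
noncomputable def condProb {Ω : Type*} [MeasurableSpace Ω] (P : Measure Ω) (E H : Set Ω) : ℝ :=
  (P (E ∩ H)).toReal / (P H).toReal

/-- Necessity direction of the Cut rule. -/
theorem cut_rule_necessity {Ω : Type*} [MeasurableSpace Ω] (P : Measure Ω)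
    [IsProbabilityMeasure P] (A B C : Set Ω)
    (hA : MeasurableSet A) (hB : MeasurableSet B) (hC : MeasurableSet C)
    (hPAB : 0 < P (A ∩ B)) :
    condProb P C (A ∩ B) * condProb P B A ≤ condProb P C A ∧
      condProb P C A ≤ condProb P C (A ∩ B) * condProb P B A + 1 - condProb P B A := by
  have hPA : 0 < P A := lt_of_lt_of_le hPAB (measure_mono Set.inter_subset_left)
  have hfin : ∀ s : Set Ω, P s ≠ ⊤ := fun s => measure_ne_top P s
  set a := (P A).toReal with ha
  set ab := (P (A ∩ B)).toReal with hab
  set cab := (P (C ∩ (A ∩ B))).toReal with hcab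
  set ca := (P (C ∩ A)).toReal with hca
  have ha0 : 0 < a := ENNReal.toReal_pos hPA.ne' (hfin A)
  have hab0 : 0 < ab := ENNReal.toReal_pos hPAB.ne' (hfin _)
  have hBA : P (B ∩ A) = P (A ∩ B) := by rw [Set.inter_comm]
  have hprod : condProb P C (A ∩ B) * condProb P B A = cab / a := by
    simp only [condProb, hBA]
    field_simp
    rw [← ha, ← hab, ← hcab, mul_assoc, mul_div_assoc, div_self (mul_pos hab0 ha0).ne', mul_one]
  have hy : condProb P B A = ab / a := by simp only [condProb, hBA]; rfl
  have hle1 : cab ≤ ca :=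
    ENNReal.toReal_mono (hfin _) (measure_mono (by intro x hx; exact ⟨hx.1, hx.2.1⟩))
  have hsplit : P (C ∩ A) ≤ P (C ∩ (A ∩ B)) + (P A - P (A ∩ B)) := by
    have hdiff : P A - P (A ∩ B) = P (A \ B) := by
      rw [← measure_inter_add_diff A hB]
      simp [ENNReal.add_sub_cancel_left (hfin _)]
    rw [hdiff]
    refine le_trans (measure_mono ?_) (measure_union_le _ _)
    intro x hx
    by_cases hxB : x ∈ B
    · exact Or.inl ⟨hx.1, hx.2, hxB⟩
    · exact Or.inr ⟨hx.2, hxB⟩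
  have hle2 : ca ≤ cab + (a - ab) := by
    have h1 : ab ≤ a := ENNReal.toReal_mono (hfin _) (measure_mono Set.inter_subset_left)
    have := ENNReal.toReal_mono (by
      exact ENNReal.add_ne_top.2 ⟨hfin _, (lt_of_le_of_lt (tsub_le_self) (lt_top_iff_ne_top.2 (hfin A))).ne⟩) hsplit
    rw [ENNReal.toReal_add (hfin _) (lt_of_le_of_lt (tsub_le_self) (lt_top_iff_ne_top.2 (hfin A))).ne,
      ENNReal.toReal_sub_of_le (measure_mono Set.inter_subset_left) (hfin _)] at this
    exact this
  constructor
  · rw [hprod]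
    simp only [condProb]
    gcongr
  · rw [hprod, hy]
    simp only [condProb]
    have h2 : ca / a ≤ (cab + (a - ab)) / a := by gcongr
    calc ca / a ≤ (cab + (a - ab)) / a := h2
      _ = cab / a + 1 - ab / a := by field_simp; ring
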